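/- Let d be a positive integer, let M be a real d×d symmetric positive definite matrix, let H be a real d×d symmetric positive semidefinite matrix, and let F be any real d×d matrix. Then ‖Fᵀ H F‖₂ ≤ ‖Fᵀ M F‖₂ · ‖M⁻¹ H‖₂, where ‖·‖₂ denotes the spectral norm (operator norm induced by the Euclidean vector norm). -/

import Mathlib

open Matrix

/-- The spectral norm of a real `d × d` matrix: the operator norm of the
induced linear map on Euclidean space. -/
noncomputable def specNorm {d : ℕ} (A : Matrix (Fin d) (Fin d) ℝ) : ℝ :=
  ‖(Matrix.toEuclideanCLM (𝕜 := ℝ) (n := Fin d) A :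
      EuclideanSpace ℝ (Fin d) →L[ℝ] EuclideanSpace ℝ (Fin d))‖

lemma specNorm_nonneg {d : ℕ} (A : Matrix (Fin d) (Fin d) ℝ) : 0 ≤ specNorm A :=
  norm_nonneg _

lemma specNorm_mul_le {d : ℕ} (A B : Matrix (Fin d) (Fin d) ℝ) :
    specNorm (A * B) ≤ specNorm A * specNorm B := by
  unfold specNorm
  rw [_root_.map_mul]
  exact ContinuousLinearMap.opNorm_comp_le _ _

lemma specNorm_star_mul_self {d : ℕ} (A : Matrix (Fin d) (Fin d) ℝ) :
    specNorm (Aᴴ * A) = specNorm A ^ 2 := by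
  unfold specNorm
  rw [_root_.map_mul, ← Matrix.star_eq_conjTranspose, map_star,
    ContinuousLinearMap.star_eq_adjoint]
  rw [show (ContinuousLinearMap.adjoint (Matrix.toEuclideanCLM (𝕜 := ℝ) (n := Fin d) A)) *
      Matrix.toEuclideanCLM (𝕜 := ℝ) (n := Fin d) A =
      (ContinuousLinearMap.adjoint (Matrix.toEuclideanCLM (𝕜 := ℝ) (n := Fin d) A)) ∘L
      Matrix.toEuclideanCLM (𝕜 := ℝ) (n := Fin d) A from rfl]
  rw [ContinuousLinearMap.norm_adjoint_comp_self, sq]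

lemma specNorm_pow_le {d : ℕ} (A : Matrix (Fin d) (Fin d) ℝ) {n : ℕ} (hn : 1 ≤ n) :
    specNorm (A ^ n) ≤ specNorm A ^ n := by
  induction n with
  | zero => omega
  | succ k ih =>
    rcases Nat.eq_or_lt_of_le hn with h | h
    · simp [← h]
    · have hk : 1 ≤ k := by omega
      calc specNorm (A ^ (k + 1)) = specNorm (A ^ k * A) := by rw [pow_succ]
        _ ≤ specNorm (A ^ k) * specNorm A := specNorm_mul_le _ _
        _ ≤ specNorm A ^ k * specNorm A :=
            mul_le_mul_of_nonneg_right (ih hk) (specNorm_nonneg _)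
        _ = specNorm A ^ (k + 1) := by rw [pow_succ]

lemma specNorm_pow_hermitian {d : ℕ} (A : Matrix (Fin d) (Fin d) ℝ)
    (hA : A.IsHermitian) (k : ℕ) :
    specNorm (A ^ 2 ^ k) = specNorm A ^ 2 ^ k := by
  induction k with
  | zero => simp
  | succ k ih =>
    have h1 : A ^ 2 ^ (k + 1) = (A ^ 2 ^ k)ᴴ * A ^ 2 ^ k := by
      rw [(hA.pow (2 ^ k)).eq, ← sq, ← pow_mul, ← pow_succ]
    rw [h1, specNorm_star_mul_self, ih, ← pow_mul, ← pow_succ]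

/-- If `a ^ (2^k) ≤ C * b ^ (2^k)` for all `k`, with `a, b ≥ 0`, then `a ≤ b`. -/
lemma le_of_pow_two_pow_le {a b C : ℝ} (ha : 0 ≤ a) (hb : 0 ≤ b)
    (h : ∀ k : ℕ, a ^ 2 ^ k ≤ C * b ^ 2 ^ k) : a ≤ b := by
  by_contra hab
  push_neg at hab
  rcases eq_or_lt_of_le hb with h0 | hbpos
  · have h0' := h 0
    rw [← h0] at h0'
    simp at h0'
    have : (0 : ℝ) < a := lt_of_le_of_lt hb hab
    linarith
  · set r := a / b with hr
    have hr1 : 1 < r := (one_lt_div hbpos).mpr hab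
    have hbound : ∀ k : ℕ, r ^ 2 ^ k ≤ C := by
      intro k
      rw [hr, div_pow, div_le_iff₀ (by positivity)]
      exact h k
    obtain ⟨n, hn⟩ := pow_unbounded_of_one_lt C hr1
    have h2 : r ^ n ≤ r ^ 2 ^ n := pow_le_pow_right₀ hr1.le (Nat.lt_two_pow_self (n := n)).le
    have := hbound n
    linarith

lemma stmt_5_aux {d : ℕ} (M H F S R : Matrix (Fin d) (Fin d) ℝ)
    (hH : H.PosSemidef)
    (hSps : S.PosSemidef) (hSS : S * S = M) (hdet : IsUnit S.det)
    (hRps : R.PosSemidef) (hRR : R * R = H) :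
    specNorm (Fᴴ * H * F) ≤ specNorm (Fᴴ * M * F) * specNorm (M⁻¹ * H) := by
  have hSinv : S * S⁻¹ = 1 := Matrix.mul_nonsing_inv S hdet
  have hinvS : S⁻¹ * S = 1 := Matrix.nonsing_inv_mul S hdet
  have hMinv : M⁻¹ = S⁻¹ * S⁻¹ := by rw [← hSS, Matrix.mul_inv_rev]
  have hRH : Rᴴ = R := hRps.1
  have hSH : Sᴴ = S := hSps.1
  have hSiH : (S⁻¹)ᴴ = S⁻¹ := by rw [S.conjTranspose_nonsing_inv, hSH]
  have hNH : (S⁻¹ * H * S⁻¹).IsHermitian := by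
    rw [Matrix.IsHermitian, Matrix.conjTranspose_mul, Matrix.conjTranspose_mul,
      hSiH, hH.1.eq, Matrix.mul_assoc]
  have hNpow : ∀ k : ℕ, (S⁻¹ * H * S⁻¹) ^ k = S * (M⁻¹ * H) ^ k * S⁻¹ := by
    intro k
    induction k with
    | zero => simp [hSinv]
    | succ k ih =>
      rw [pow_succ, ih, pow_succ]
      calc S * (M⁻¹ * H) ^ k * S⁻¹ * (S⁻¹ * H * S⁻¹)
          = S * ((M⁻¹ * H) ^ k * ((S⁻¹ * S⁻¹) * H)) * S⁻¹ := by
            simp only [Matrix.mul_assoc]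
        _ = S * ((M⁻¹ * H) ^ k * (M⁻¹ * H)) * S⁻¹ := by rw [← hMinv]
  have hkey : specNorm (S⁻¹ * H * S⁻¹) ≤ specNorm (M⁻¹ * H) := by
    refine le_of_pow_two_pow_le (specNorm_nonneg _) (specNorm_nonneg _)
      (C := specNorm S * specNorm S⁻¹) fun k => ?_
    rw [← specNorm_pow_hermitian _ hNH k, hNpow]
    calc specNorm (S * (M⁻¹ * H) ^ 2 ^ k * S⁻¹)
        ≤ specNorm (S * (M⁻¹ * H) ^ 2 ^ k) * specNorm S⁻¹ := specNorm_mul_le _ _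
      _ ≤ specNorm S * specNorm ((M⁻¹ * H) ^ 2 ^ k) * specNorm S⁻¹ :=
          mul_le_mul_of_nonneg_right (specNorm_mul_le _ _) (specNorm_nonneg _)
      _ ≤ specNorm S * specNorm (M⁻¹ * H) ^ 2 ^ k * specNorm S⁻¹ := by
          refine mul_le_mul_of_nonneg_right (mul_le_mul_of_nonneg_left ?_
            (specNorm_nonneg _)) (specNorm_nonneg _)
          exact specNorm_pow_le _ Nat.one_le_two_pow
      _ = specNorm S * specNorm S⁻¹ * specNorm (M⁻¹ * H) ^ 2 ^ k := by ring
  have e1 : specNorm (Fᴴ * H * F) = specNorm (R * F) ^ 2 := by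
    rw [← specNorm_star_mul_self (R * F)]
    congr 1
    rw [Matrix.conjTranspose_mul, hRH, ← hRR]
    simp only [Matrix.mul_assoc]
  have e2 : specNorm (Fᴴ * M * F) = specNorm (S * F) ^ 2 := by
    rw [← specNorm_star_mul_self (S * F)]
    congr 1
    rw [Matrix.conjTranspose_mul, hSH, ← hSS]
    simp only [Matrix.mul_assoc]
  have e3 : specNorm (R * F) ≤ specNorm (R * S⁻¹) * specNorm (S * F) := by
    have h : R * F = (R * S⁻¹) * (S * F) := by
      rw [Matrix.mul_assoc, ← Matrix.mul_assoc S⁻¹, hinvS, Matrix.one_mul]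
    rw [h]
    exact specNorm_mul_le _ _
  have e4 : specNorm (R * S⁻¹) ^ 2 = specNorm (S⁻¹ * H * S⁻¹) := by
    rw [← specNorm_star_mul_self (R * S⁻¹)]
    congr 1
    rw [Matrix.conjTranspose_mul, hSiH, hRH, ← hRR]
    simp only [Matrix.mul_assoc]
  calc specNorm (Fᴴ * H * F) = specNorm (R * F) ^ 2 := e1
    _ ≤ (specNorm (R * S⁻¹) * specNorm (S * F)) ^ 2 :=
        pow_le_pow_left₀ (specNorm_nonneg _) e3 2
    _ = specNorm (S⁻¹ * H * S⁻¹) * specNorm (S * F) ^ 2 := by rw [mul_pow, e4]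
    _ ≤ specNorm (M⁻¹ * H) * specNorm (S * F) ^ 2 :=
        mul_le_mul_of_nonneg_right hkey (pow_nonneg (specNorm_nonneg _) 2)
    _ = specNorm (Fᴴ * M * F) * specNorm (M⁻¹ * H) := by rw [e2, mul_comm]

theorem stmt_5 (d : ℕ) (hd : 0 < d)
    (M H F : Matrix (Fin d) (Fin d) ℝ)
    (hM : M.PosDef) (hH : H.PosSemidef) :
    specNorm (Fᵀ * H * F) ≤ specNorm (Fᵀ * M * F) * specNorm (M⁻¹ * H) := by
  rw [← F.conjTranspose_eq_transpose_of_trivial]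
  have hMps := hM.posSemidef
  open MatrixOrder in
  obtain ⟨S, hSps, hSS⟩ : ∃ S : Matrix (Fin d) (Fin d) ℝ, S.PosSemidef ∧ S * S = M :=
    ⟨CFC.sqrt M, (CFC.sqrt_nonneg M).posSemidef, CFC.sqrt_mul_sqrt_self M hMps.nonneg⟩
  open MatrixOrder in
  obtain ⟨R, hRps, hRR⟩ : ∃ R : Matrix (Fin d) (Fin d) ℝ, R.PosSemidef ∧ R * R = H :=
    ⟨CFC.sqrt H, (CFC.sqrt_nonneg H).posSemidef, CFC.sqrt_mul_sqrt_self H hH.nonneg⟩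
  have hdet : IsUnit S.det := by
    have h1 : S.det * S.det = M.det := by
      rw [← Matrix.det_mul, hSS]
    have h2 := hM.det_pos
    refine isUnit_iff_ne_zero.mpr fun h => ?_
    rw [h, mul_zero] at h1
    linarith
  exact stmt_5_aux M H F S R hH hSps
    hSS hdet hRps hRR
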